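/- Let E be a real Banach space, let Δt > 0, t₀ ≤ t₁, M ≥ 0, and let y : ℝ → E be continuously differentiable with y(t₀) = 0. Suppose that for all t ∈ [t₀, t₁], ‖Δt·y'(t) + y(t)‖ ≤ M. Then ‖y(t)‖ ≤ M for all t ∈ [t₀, t₁]. -/

import Mathlib

open Set Real

/-- Remark 4.3: if `y` is continuously differentiable with `y t₀ = 0` and
`‖Δt·y'(t) + y(t)‖ ≤ M` on `[t₀, t₁]`, then `‖y t‖ ≤ M` on `[t₀, t₁]`. -/
theorem stmt14 {E : Type*} [NormedAddCommGroup E] [NormedSpace ℝ E] [CompleteSpace E]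
    (Δt : ℝ) (hΔt : 0 < Δt) (t₀ t₁ : ℝ) (ht : t₀ ≤ t₁) (M : ℝ) (hM : 0 ≤ M)
    (y y' : ℝ → E) (hderiv : ∀ t, HasDerivAt y (y' t) t) (hcont : Continuous y')
    (hy0 : y t₀ = 0)
    (hbound : ∀ t ∈ Set.Icc t₀ t₁, ‖Δt • y' t + y t‖ ≤ M) :
    ∀ t ∈ Set.Icc t₀ t₁, ‖y t‖ ≤ M := by
  set g : ℝ → E := fun t => Real.exp (t / Δt) • y t with hg
  set g' : ℝ → E := fun t => (Δt⁻¹ * Real.exp (t / Δt)) • (Δt • y' t + y t) with hg'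
  have hgderiv : ∀ t, HasDerivAt g (g' t) t := by
    intro t
    have he : HasDerivAt (fun t : ℝ => Real.exp (t / Δt)) (Real.exp (t / Δt) * Δt⁻¹) t := by
      have : HasDerivAt (fun t : ℝ => t / Δt) Δt⁻¹ t := by
        simpa using (hasDerivAt_id t).div_const Δt
      exact (Real.hasDerivAt_exp (t / Δt)).comp t this
    have := he.smul (hderiv t)
    convert this using 1
    · rfl
    simp only [hg', smul_add, smul_smul]
    congr 1
    · congr 1
      field_simp
    · rw [mul_comm]
  set B : ℝ → ℝ := fun t => M * (Real.exp (t / Δt) - Real.exp (t₀ / Δt)) with hB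
  set B' : ℝ → ℝ := fun t => M * (Real.exp (t / Δt) * Δt⁻¹) with hB'
  have hBderiv : ∀ t, HasDerivAt B (B' t) t := by
    intro t
    have he : HasDerivAt (fun t : ℝ => Real.exp (t / Δt)) (Real.exp (t / Δt) * Δt⁻¹) t := by
      have : HasDerivAt (fun t : ℝ => t / Δt) Δt⁻¹ t := by
        simpa using (hasDerivAt_id t).div_const Δt
      exact (Real.hasDerivAt_exp (t / Δt)).comp t this
    simpa [hB, hB', mul_comm] using ((he.sub_const (Real.exp (t₀ / Δt))).const_mul M)
  have key : ∀ ⦃x⦄, x ∈ Icc t₀ t₁ → ‖g x‖ ≤ B x := by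
    apply image_norm_le_of_norm_deriv_right_le_deriv_boundary
      (f' := g') (B := B) (B' := B')
    · exact fun x _ => (hgderiv x).continuousAt.continuousWithinAt
    · exact fun x _ => (hgderiv x).hasDerivWithinAt
    · simp [hg, hB, hy0]
    · exact hBderiv
    · intro x hx
      have hb := hbound x (Ico_subset_Icc_self hx)
      have hpos : 0 ≤ Δt⁻¹ * Real.exp (x / Δt) := by positivity
      calc ‖g' x‖ = ‖(Δt⁻¹ * Real.exp (x / Δt)) • (Δt • y' x + y x)‖ := rfl
        _ = (Δt⁻¹ * Real.exp (x / Δt)) * ‖Δt • y' x + y x‖ := by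
            rw [norm_smul, Real.norm_eq_abs, abs_of_nonneg hpos]
        _ ≤ (Δt⁻¹ * Real.exp (x / Δt)) * M := by
            exact mul_le_mul_of_nonneg_left hb hpos
        _ = B' x := by simp [hB']; ring
  intro t htmem
  have hkey := key htmem
  have hexp : (0:ℝ) < Real.exp (t / Δt) := Real.exp_pos _
  have hnorm : ‖g t‖ = Real.exp (t / Δt) * ‖y t‖ := by
    simp [hg, norm_smul, abs_of_pos hexp]
  rw [hnorm] at hkey
  have hBle : B t ≤ M * Real.exp (t / Δt) := by
    simp only [hB]
    nlinarith [Real.exp_pos (t₀ / Δt)]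
  have : Real.exp (t / Δt) * ‖y t‖ ≤ M * Real.exp (t / Δt) := hkey.trans hBle
  nlinarith
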